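/- If T is a tree on n ≥ 2 vertices with α(T) = n/2, then T contains two pendant vertices at odd distance from each other. -/
import Mathlib


open Finset SimpleGraph
open scoped Classical

variable {V : Type*}

/-- A stable (independent) set of vertices. -/
def stableSet (G : SimpleGraph V) (S : Finset V) : Prop :=
  ∀ u ∈ S, ∀ w ∈ S, ¬ G.Adj u w

/-- A maximum stable set. -/
def maxStableSet [Fintype V] (G : SimpleGraph V) (S : Finset V) : Prop :=
  stableSet G S ∧ ∀ S' : Finset V, stableSet G S' → S'.card ≤ S.card

/-- The independence number α(G). -/
noncomputable def alphaNum [Fintype V] (G : SimpleGraph V) : ℕ :=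
  ((Finset.univ : Finset V).powerset.filter (fun S => stableSet G S)).sup Finset.card

/-- core(G): the intersection of all maximum stable sets of G. -/
noncomputable def coreSet [Fintype V] (G : SimpleGraph V) : Finset V :=
  Finset.univ.filter (fun v => ∀ S : Finset V, maxStableSet G S → v ∈ S)

/-- A pendant vertex: a vertex with exactly one neighbor. -/
def pendant (G : SimpleGraph V) (v : V) : Prop :=
  ∃! w, G.Adj v w

/-- {A, B} is a bipartition of G into color classes. -/
def isBipartition [Fintype V] (G : SimpleGraph V) (A B : Finset V) : Prop :=
  Disjoint A B ∧ A ∪ B = Finset.univ ∧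
    ∀ u v, G.Adj u v → (u ∈ A ∧ v ∈ B) ∨ (u ∈ B ∧ v ∈ A)

/-- In a tree, any path realizes the graph distance between its endpoints. -/
lemma tree_path_length {T : SimpleGraph V} (hT : T.IsTree) {u v : V} {p : T.Walk u v}
    (hp : p.IsPath) : p.length = T.dist u v := by
  obtain ⟨q, hq, hql⟩ := hT.isConnected.exists_path_of_dist u v
  have h := (hT.existsUnique_path u v).unique hp hq
  rw [h, hql]

/-- In a tree, adjacent vertices have distances to any root differing by exactly one. -/
lemma tree_adj_dist {T : SimpleGraph V} (hT : T.IsTree) {u v : V} (h : T.Adj u v) (r : V) :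
    T.dist r v = T.dist r u + 1 ∨ T.dist r u = T.dist r v + 1 := by
  obtain ⟨p, hp, hpl⟩ := hT.isConnected.exists_path_of_dist r u
  by_cases hv : v ∈ p.support
  · right
    have h1 : (p.takeUntil v hv).length = T.dist r v := tree_path_length hT (hp.takeUntil hv)
    have h2 : (p.dropUntil v hv).length = T.dist v u := tree_path_length hT (hp.dropUntil hv)
    have h3 : T.dist v u = 1 := SimpleGraph.dist_eq_one_iff_adj.2 h.symm
    have h4 := congrArg SimpleGraph.Walk.length (p.take_spec hv)
    rw [SimpleGraph.Walk.length_append] at h4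
    omega
  · left
    have hq : (p.concat h).IsPath := by
      rw [← SimpleGraph.Walk.isPath_reverse_iff, SimpleGraph.Walk.reverse_concat]
      exact hp.reverse.cons (by simpa using hv)
    have := tree_path_length hT hq
    rw [SimpleGraph.Walk.length_concat, hpl] at this
    omega

/-- In a tree with independence number half the vertex count, each color class of any
2-coloring contains a pendant vertex. -/
lemma exists_pendant_class [Fintype V] {T : SimpleGraph V} (hT : T.IsTree)
    (hn : 2 ≤ Fintype.card V) (halpha : 2 * alphaNum T = Fintype.card V)
    (c : T.Coloring Bool) : ∃ u, pendant T u ∧ c u = true := by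
  by_contra hno
  push_neg at hno
  set B : Finset V := univ.filter (fun v => c v = true) with hB
  set A : Finset V := univ.filter (fun v => ¬ c v = true) with hA
  have hAstab : stableSet T A := by
    intro x hx y hy hxy
    rw [hA, mem_filter] at hx hy
    have := c.valid hxy
    cases hb : c x <;> cases hb' : c y <;> simp_all
  have hAcard : A.card ≤ alphaNum T := by
    apply Finset.le_sup (f := Finset.card)
    simp only [mem_filter, mem_powerset]
    exact ⟨subset_univ _, hAstab⟩
  have hcover : T.edgeFinset = B.biUnion (fun v => T.incidenceFinset v) := by
    ext e
    simp only [mem_biUnion, mem_incidenceFinset, mem_edgeFinset, hB, mem_filter, mem_univ,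
      true_and]
    induction e with
    | h z w =>
      constructor
      · intro he
        have hzw := c.valid he
        cases hz : c z
        · exact ⟨w, by cases hw : c w <;> simp_all, he, by simp⟩
        · exact ⟨z, hz, he, by simp⟩
      · rintro ⟨v, -, he, -⟩
        exact he
  have hdisj : ∀ x ∈ B, ∀ y ∈ B, x ≠ y →
      Disjoint (T.incidenceFinset x) (T.incidenceFinset y) := by
    intro x hx y hy hxy
    rw [Finset.disjoint_left]
    intro e hex hey
    rw [mem_incidenceFinset] at hex hey
    have he : e = s(x, y) := ((Sym2.mem_and_mem_iff hxy).1 ⟨hex.2, hey.2⟩)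
    have hadj : T.Adj x y := by
      have := hex.1
      rwa [he, SimpleGraph.mem_edgeSet] at this
    have := c.valid hadj
    rw [hB, mem_filter] at hx hy
    simp_all
  have hsum : T.edgeFinset.card = ∑ v ∈ B, T.degree v := by
    rw [hcover, Finset.card_biUnion hdisj]
    exact Finset.sum_congr rfl fun v _ => T.card_incidenceFinset_eq_degree v
  have hdeg : ∀ v ∈ B, 2 ≤ T.degree v := by
    intro v hv
    rw [hB, mem_filter] at hv
    have hpos : 0 < T.degree v := by
      rw [T.degree_pos_iff_exists_adj]
      obtain ⟨w, hw⟩ := Fintype.exists_ne_of_one_lt_card (by omega) v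
      obtain p := (hT.isConnected.preconnected v w).some
      cases p with
      | nil => exact absurd rfl hw.symm
      | cons h' _ => exact ⟨_, h'⟩
    have hne1 : T.degree v ≠ 1 := by
      intro h1
      obtain ⟨a, ha⟩ := Finset.card_eq_one.1 h1
      apply hno v _ hv.2
      refine ⟨a, ?_, ?_⟩
      · show T.Adj v a
        rw [← SimpleGraph.mem_neighborFinset, ha]; simp
      · intro y hy
        have : y ∈ T.neighborFinset v := (SimpleGraph.mem_neighborFinset _ _ _).2 hy
        rw [ha] at this; simpa using this
    omega
  have hsumge : 2 * B.card ≤ ∑ v ∈ B, T.degree v := by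
    calc 2 * B.card = ∑ _v ∈ B, 2 := by rw [Finset.sum_const, smul_eq_mul, mul_comm]
    _ ≤ _ := Finset.sum_le_sum hdeg
  have hAB : A.card + B.card = Fintype.card V := by
    have h := Finset.card_filter_add_card_filter_not
      (s := (univ : Finset V)) (p := fun v => c v = true)
    rw [Finset.card_univ] at h
    rw [hA, hB]
    omega
  have hedge := hT.card_edgeFinset
  omega

theorem stmt5 [Fintype V] (T : SimpleGraph V) (hT : T.IsTree)
    (hn : 2 ≤ Fintype.card V) (halpha : 2 * alphaNum T = Fintype.card V) :
    ∃ u v : V, u ≠ v ∧ pendant T u ∧ pendant T v ∧ Odd (T.dist u v) := by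
  have hne : Nonempty V := Fintype.card_pos_iff.1 (by omega)
  obtain ⟨r⟩ := hne
  have hvalid : ∀ {x y : V}, T.Adj x y →
      (fun w => decide (Odd (T.dist r w))) x ≠ (fun w => decide (Odd (T.dist r w))) y := by
    intro x y hxy heq
    simp only [decide_eq_decide] at heq
    rcases tree_adj_dist hT hxy r with h | h <;> rw [h, Nat.odd_add_one] at heq <;> tauto
  let c : T.Coloring Bool := SimpleGraph.Coloring.mk _ hvalid
  have hvalid' : ∀ {x y : V}, T.Adj x y → (fun w => !(c w)) x ≠ (fun w => !(c w)) y := by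
    intro x y hxy heq
    exact c.valid hxy (by simpa using heq)
  let c' : T.Coloring Bool := SimpleGraph.Coloring.mk _ hvalid'
  obtain ⟨u, hu, hcu⟩ := exists_pendant_class hT hn halpha c
  obtain ⟨v, hv, hcv⟩ := exists_pendant_class hT hn halpha c'
  have hcv' : c v = false := by
    have : (!(c v)) = true := hcv
    simpa using this
  refine ⟨u, v, ?_, hu, hv, ?_⟩
  · rintro rfl
    rw [hcu] at hcv'
    simp at hcv'
  · obtain ⟨p, hp, hpl⟩ := hT.isConnected.exists_path_of_dist u v
    rw [← hpl, c.odd_length_iff_not_congr p]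
    simp [hcu, hcv']
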